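/- Let φ: Σ⁺ → S be a semigroup morphism to a finite semigroup S and let A = (Q,Σ,Δ,ι,{f},R,<) be a φ-good automaton that is reduced (every state occurs on some accepting run). Then for all states p, q ∈ Q, every subset X ⊆ Q with x < p and x < q for all x ∈ X, and every s ∈ S, there exists an ε-free φ-good rational expression F over Σ with L(F) = L_{p,X,q} ∩ φ⁻¹(s). -/

import Mathlib

/-- A (nondeterministic) Büchi/finite-word automaton with ordered states. -/
structure Auto (A : Type) where
  Q : Type
  fin : Fintype Q
  lin : LinearOrder Q
  trans : Q → A → Q → Prop
  init : Q
  final : Set Q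
  rep : Set Q

namespace Auto

variable {A : Type} (M : Auto A)

/-- The strict order on states. -/
def slt (p q : M.Q) : Prop := M.lin.lt p q

/-- `pathIn X p w q`: nonempty word `w` labels a run from `p` to `q`
with all intermediate states in `X`. -/
def pathIn (X : Set M.Q) : M.Q → List A → M.Q → Prop
  | _, [], _ => False
  | p, [a], q => M.trans p a q
  | p, a :: b :: w, q => ∃ r, r ∈ X ∧ M.trans p a r ∧ pathIn X r (b :: w) q

/-- `L_{p,X,q}`. -/
def Lset (X : Set M.Q) (p q : M.Q) : Set (List A) := {w | M.pathIn X p w q}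

/-- `↓q`. -/
def below (q : M.Q) : Set M.Q := {p | M.slt p q}

/-- `L_q = L_{q,↓q,q}`. -/
def Lq (q : M.Q) : Set (List A) := M.Lset (M.below q) q q

/-- Accepting run on a nonempty finite word: `ρ i` is the state after reading `i` letters. -/
def FinAccRun (w : List A) (ρ : Fin (w.length + 1) → M.Q) : Prop :=
  ρ 0 = M.init ∧
  (∀ i : Fin w.length, M.trans (ρ i.castSucc) (w.get i) (ρ i.succ)) ∧
  ρ (Fin.last w.length) ∈ M.final

/-- Accepting (Büchi) run on an infinite word. -/
def InfAccRun (w : ℕ → A) (ρ : ℕ → M.Q) : Prop :=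
  ρ 0 = M.init ∧ (∀ i, M.trans (ρ i) (w i) (ρ (i + 1))) ∧
  ∀ n, ∃ m, n ≤ m ∧ ρ m ∈ M.rep

/-- (G1): every finite or infinite word has exactly one accepting run. -/
def G1 : Prop :=
  (∀ w : List A, w ≠ [] → ∃! ρ : Fin (w.length + 1) → M.Q, M.FinAccRun w ρ) ∧
  (∀ w : ℕ → A, ∃! ρ : ℕ → M.Q, M.InfAccRun w ρ)

/-- (G2): each `L_q` is mapped by `φ` to a single idempotent of `S`. -/
def G2 {S : Type} [Semigroup S] (φ : List A → S) : Prop :=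
  ∀ q : M.Q, ∃ e : S, e * e = e ∧ ∀ w ∈ M.Lq q, φ w = e

/-- (G3): the initial state has no incoming transitions and is maximal. -/
def G3 : Prop :=
  (∀ p a, ¬ M.trans p a M.init) ∧ ∀ q : M.Q, q ≠ M.init → M.slt q M.init

/-- `φ`-weakly-good automaton. -/
def WeaklyGood {S : Type} [Semigroup S] (φ : List A → S) : Prop :=
  M.G1 ∧ M.G2 φ ∧ M.G3

/-- (G4) and `φ`-goodness. -/
def Good {S : Type} [Semigroup S] (φ : List A → S) : Prop :=
  M.WeaklyGood φ ∧
  ∃ f : M.Q, M.final = {f} ∧ (∀ a q, ¬ M.trans f a q) ∧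
    M.slt f M.init ∧ ∀ q : M.Q, q ≠ M.init → q ≠ f → M.slt q f

def Deterministic : Prop := ∀ p a q q', M.trans p a q → M.trans p a q' → q = q'

def Complete : Prop := ∀ p a, ∃ q, M.trans p a q

end Auto

/-- Rational expressions: `∅ | ε | a | F∪F | F·F | F⁺`. -/
inductive RE (A : Type) where
  | zero : RE A
  | eps : RE A
  | char : A → RE A
  | union : RE A → RE A → RE A
  | cat : RE A → RE A → RE A
  | plus : RE A → RE A

namespace RE

variable {A : Type}

/-- The language denoted by a rational expression. -/
def lang : RE A → Set (List A)
  | zero => ∅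
  | eps => {[]}
  | char a => {[a]}
  | union e f => lang e ∪ lang f
  | cat e f => {w | ∃ u v, u ∈ lang e ∧ v ∈ lang f ∧ w = u ++ v}
  | plus e => {w | ∃ l : List (List A), l ≠ [] ∧ (∀ u ∈ l, u ∈ lang e) ∧ w = l.flatten}

/-- `ε` does not occur in the expression. -/
def epsFree : RE A → Prop
  | zero => True
  | eps => False
  | char _ => True
  | union e f => epsFree e ∧ epsFree f
  | cat e f => epsFree e ∧ epsFree f
  | plus e => epsFree e

/-- Every denoted word has a unique parse: unions are disjoint, and
concatenation / Kleene-plus decompositions are unique. -/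
def Unambiguous : RE A → Prop
  | zero => True
  | eps => True
  | char _ => True
  | union e f => Unambiguous e ∧ Unambiguous f ∧ lang e ∩ lang f = ∅
  | cat e f => Unambiguous e ∧ Unambiguous f ∧
      ∀ u v u' v', u ∈ lang e → v ∈ lang f → u' ∈ lang e → v' ∈ lang f →
        u ++ v = u' ++ v' → u = u' ∧ v = v'
  | plus e => Unambiguous e ∧
      ∀ l l' : List (List A), l ≠ [] → l' ≠ [] → (∀ u ∈ l, u ∈ lang e) →
        (∀ u ∈ l', u ∈ lang e) → l.flatten = l'.flatten → l = l'

/-- The subexpression relation. -/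
inductive Sub : RE A → RE A → Prop
  | refl (e : RE A) : Sub e e
  | unionL {e f g : RE A} : Sub e f → Sub e (union f g)
  | unionR {e f g : RE A} : Sub e g → Sub e (union f g)
  | catL {e f g : RE A} : Sub e f → Sub e (cat f g)
  | catR {e f g : RE A} : Sub e g → Sub e (cat f g)
  | plus {e f : RE A} : Sub e f → Sub e (plus f)

/-- `φ`-good expression: unambiguous, every subexpression maps to a single
semigroup element, and subexpressions under `⁺` map to an idempotent. -/
def Good {S : Type} [Semigroup S] (φ : List A → S) (F : RE A) : Prop :=
  F.Unambiguous ∧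
  (∀ E : RE A, Sub E F → ∃ s : S, ∀ w ∈ E.lang, φ w = s) ∧
  (∀ E : RE A, Sub (RE.plus E) F → ∃ s : S, s * s = s ∧ ∀ w ∈ E.lang, φ w = s)

end RE

namespace GoodProof

variable {A : Type} {M : Auto A}

/-- A run of a finite word: transitions hold along the word. -/
def NRun (M : Auto A) (w : List A) (ρ : ℕ → M.Q) : Prop :=
  ∀ i (h : i < w.length), M.trans (ρ i) (w[i]'h) (ρ (i + 1))

lemma pathIn_ne_nil {X : Set M.Q} {p q : M.Q} {w : List A} (h : M.pathIn X p w q) : w ≠ [] := by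
  cases w with
  | nil => simp [Auto.pathIn] at h
  | cons a t => simp

lemma pathIn_cons {X : Set M.Q} {p t q : M.Q} {a : A} {w : List A}
    (htr : M.trans p a t) (ht : t ∈ X) (h : M.pathIn X t w q) : M.pathIn X p (a :: w) q := by
  cases w with
  | nil => exact absurd h (by simp [Auto.pathIn])
  | cons b w' => exact ⟨t, ht, htr, h⟩

lemma pathIn_mono {X Y : Set M.Q} (hXY : X ⊆ Y) {p q : M.Q} {w : List A}
    (h : M.pathIn X p w q) : M.pathIn Y p w q := by
  induction w generalizing p with
  | nil => simp [Auto.pathIn] at h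
  | cons a w' ih =>
    cases w' with
    | nil => exact h
    | cons b w'' =>
      obtain ⟨t, ht, htr, hrest⟩ := h
      exact ⟨t, hXY ht, htr, ih hrest⟩

lemma pathIn_append {X Y Z : Set M.Q} {p r q : M.Q} {u v : List A}
    (hu : M.pathIn X p u r) (hv : M.pathIn Y r v q) (hr : r ∈ Z)
    (hX : X ⊆ Z) (hY : Y ⊆ Z) : M.pathIn Z p (u ++ v) q := by
  induction u generalizing p with
  | nil => simp [Auto.pathIn] at hu
  | cons a u' ih =>
    cases u' with
    | nil =>
      have htr : M.trans p a r := hu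
      exact pathIn_cons htr hr (pathIn_mono hY hv)
    | cons b u'' =>
      obtain ⟨t, ht, htr, hrest⟩ := hu
      exact pathIn_cons htr (hX ht) (ih hrest)

lemma pathIn_to_run {X : Set M.Q} : ∀ {w : List A} {p q : M.Q}, M.pathIn X p w q →
    ∃ ρ : ℕ → M.Q, ρ 0 = p ∧ ρ w.length = q ∧ NRun M w ρ ∧
      ∀ i, 0 < i → i < w.length → ρ i ∈ X := by
  intro w
  induction w with
  | nil => intro p q h; simp [Auto.pathIn] at h
  | cons a w' ih =>
    intro p q h
    cases w' with
    | nil =>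
      refine ⟨fun i => if i = 0 then p else q, by simp, by simp, ?_, by intro i h1 h2; simp at h2; omega⟩
      intro i hi
      simp at hi; subst hi
      simpa [Auto.pathIn] using h
    | cons b w'' =>
      obtain ⟨t, ht, htr, hrest⟩ := h
      obtain ⟨ρ', h0, hend, hrun, hint⟩ := ih hrest
      refine ⟨fun i => if i = 0 then p else ρ' (i - 1), by simp, by simpa using hend, ?_, ?_⟩
      · intro i hi
        cases i with
        | zero => simpa [h0] using htr
        | succ j =>
          have := hrun j (by simpa using hi)
          simpa using this
      · intro i h1 h2
        cases i with
        | zero => omega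
        | succ j =>
          rcases Nat.eq_zero_or_pos j with hj | hj
          · subst hj; simpa [h0] using ht
          · have := hint j hj (by simp at h2 ⊢; omega)
            simpa using this

lemma run_to_pathIn {X : Set M.Q} : ∀ {w : List A} {p q : M.Q} (ρ : ℕ → M.Q), w ≠ [] →
    ρ 0 = p → ρ w.length = q → NRun M w ρ →
    (∀ i, 0 < i → i < w.length → ρ i ∈ X) → M.pathIn X p w q := by
  intro w
  induction w with
  | nil => intro p q ρ h; exact absurd rfl h
  | cons a w' ih =>
    intro p q ρ _ h0 hend hrun hint
    cases w' with
    | nil =>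
      have := hrun 0 (by simp)
      simp [h0] at this
      simpa [Auto.pathIn, ← hend] using this
    | cons b w'' =>
      refine pathIn_cons (t := ρ 1) ?_ ?_ ?_
      · have := hrun 0 (by simp)
        simpa [h0] using this
      · exact hint 1 (by omega) (by simp)
      · refine ih (fun i => ρ (i + 1)) (by simp) rfl (by simpa using hend) ?_ ?_
        · intro i hi
          have := hrun (i + 1) (by simp at hi ⊢; omega)
          simpa using this
        · intro i h1 h2
          exact hint (i + 1) (by omega) (by simp at h2 ⊢; omega)


def glue (n : ℕ) (ρ1 ρ2 : ℕ → M.Q) : ℕ → M.Q := fun i => if i < n then ρ1 i else ρ2 (i - n)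

lemma glue_left {n : ℕ} {ρ1 ρ2 : ℕ → M.Q} (hb : ρ1 n = ρ2 0) {i : ℕ} (hi : i ≤ n) :
    glue n ρ1 ρ2 i = ρ1 i := by
  unfold glue
  rcases lt_or_eq_of_le hi with h | h
  · simp [h]
  · subst h; simp [hb.symm]

lemma glue_right {n : ℕ} {ρ1 ρ2 : ℕ → M.Q} {i : ℕ} (hi : n ≤ i) :
    glue n ρ1 ρ2 i = ρ2 (i - n) := by
  unfold glue
  simp [Nat.not_lt.2 hi]

lemma glue_run {u v : List A} {ρ1 ρ2 : ℕ → M.Q} (h1 : NRun M u ρ1) (h2 : NRun M v ρ2)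
    (hb : ρ1 u.length = ρ2 0) : NRun M (u ++ v) (glue u.length ρ1 ρ2) := by
  intro i hi
  simp only [List.length_append] at hi
  by_cases hlt : i < u.length
  · have hg : (u ++ v)[i]'(by simp; omega) = u[i]'hlt := List.getElem_append_left hlt
    rw [hg, glue_left hb (le_of_lt hlt), glue_left hb (by omega)]
    exact h1 i hlt
  · have hge : u.length ≤ i := by omega
    have hg : (u ++ v)[i]'(by simp; omega) = v[i - u.length]'(by omega) :=
      List.getElem_append_right hge
    rw [hg, glue_right hge, glue_right (by omega)]
    have : i + 1 - u.length = (i - u.length) + 1 := by omega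
    rw [this]
    exact h2 (i - u.length) (by omega)

/-- length of the flattening of the first `k` blocks. -/
def cutlen (l : List (List A)) (k : ℕ) : ℕ := ((l.take k).flatten).length

lemma cutlen_zero (l : List (List A)) : cutlen l 0 = 0 := by simp [cutlen]

lemma cutlen_succ_cons (m : List A) (t : List (List A)) (k : ℕ) :
    cutlen (m :: t) (k + 1) = m.length + cutlen t k := by simp [cutlen]

lemma cutlen_full (l : List (List A)) : cutlen l l.length = l.flatten.length := by simp [cutlen]

lemma cutlen_le (l : List (List A)) (k : ℕ) : cutlen l k ≤ l.flatten.length := by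
  induction l generalizing k with
  | nil => simp [cutlen]
  | cons m t ih =>
    cases k with
    | zero => simp [cutlen]
    | succ j => rw [cutlen_succ_cons]; have := ih j; simp only [List.flatten_cons, List.length_append]; omega

lemma flatten_ne_nil {l : List (List A)} (hl : l ≠ []) (hm : ∀ m ∈ l, m ≠ []) :
    l.flatten ≠ [] := by
  cases l with
  | nil => exact absurd rfl hl
  | cons m t =>
    have : m ≠ [] := hm m (by simp)
    simp [this]

lemma eq_nil_of_flatten_eq_nil {l : List (List A)} (hm : ∀ m ∈ l, m ≠ [])
    (h : l.flatten = []) : l = [] := by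
  by_contra hne
  exact flatten_ne_nil hne hm h

section FlattenRuns

variable {X' : Set M.Q} {r p q : M.Q}

lemma runFl (hrX : r ∉ X') :
    ∀ {l : List (List A)}, l ≠ [] → (∀ m ∈ l, M.pathIn X' r m r) →
    ∃ ρ : ℕ → M.Q, ρ 0 = r ∧ NRun M l.flatten ρ ∧
      ∀ i ≤ l.flatten.length, (ρ i = r ↔ ∃ k ≤ l.length, i = cutlen l k) := by
  intro l
  induction l with
  | nil => intro h; exact absurd rfl h
  | cons m t ih =>
    intro _ hmem
    have hm := hmem m (by simp)
    obtain ⟨ρ1, h10, h1e, h1r, h1i⟩ := pathIn_to_run hm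
    have hmne : m ≠ [] := pathIn_ne_nil hm
    cases t with
    | nil =>
      refine ⟨ρ1, h10, by simpa using h1r, ?_⟩
      intro i hi
      simp only [List.flatten_cons, List.flatten_nil, List.append_nil] at hi ⊢
      constructor
      · intro hir
        rcases Nat.eq_zero_or_pos i with h0 | h0
        · exact ⟨0, by simp, by simp [h0, cutlen_zero]⟩
        · rcases lt_or_eq_of_le hi with hlt | heq
          · exact absurd (hir ▸ h1i i h0 hlt) hrX
          · exact ⟨1, by simp, by simp [heq, cutlen_succ_cons, cutlen_zero]⟩
      · rintro ⟨k, hk, rfl⟩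
        simp only [List.length_cons, List.length_nil] at hk
        rcases k with _ | _ | k
        · simpa [cutlen_zero] using h10
        · rw [cutlen_succ_cons]; simpa [cutlen_zero] using h1e
        · omega
    | cons m2 t2 =>
      obtain ⟨ρ2, h20, h2r, h2c⟩ := ih (by simp) (fun m' hm' => hmem m' (by simp [hm']))
      have hb : ρ1 m.length = ρ2 0 := by rw [h1e, h20]
      refine ⟨glue m.length ρ1 ρ2, by rw [glue_left hb (by omega)]; exact h10, ?_, ?_⟩
      · have := glue_run h1r h2r hb
        simpa using this
      · intro i hi
        simp only [List.flatten_cons, List.length_append] at hi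
        by_cases hlt : i < m.length
        · rw [glue_left hb (le_of_lt hlt)]
          constructor
          · intro hir
            rcases Nat.eq_zero_or_pos i with h0 | h0
            · exact ⟨0, by simp, by simp [h0, cutlen_zero]⟩
            · exact absurd (hir ▸ h1i i h0 hlt) hrX
          · rintro ⟨k, hk, rfl⟩
            cases k with
            | zero => simpa [cutlen_zero] using h10
            | succ j => exfalso; rw [cutlen_succ_cons] at hlt; omega
        · have hge : m.length ≤ i := by omega
          rw [glue_right hge]
          rw [h2c (i - m.length) (by simp only [List.flatten_cons, List.length_append]; omega)]
          constructor
          · rintro ⟨k, hk, he⟩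
            exact ⟨k + 1, by simpa using hk, by rw [cutlen_succ_cons]; omega⟩
          · rintro ⟨k, hk, he⟩
            cases k with
            | zero =>
              exfalso
              simp [cutlen_zero] at he
              have hm0 : 0 < m.length := List.length_pos_iff.mpr hmne
              omega
            | succ j =>
              rw [cutlen_succ_cons] at he
              exact ⟨j, by simpa using hk, by omega⟩

lemma runL (hrX : r ∉ X') (hrq : r ≠ q) {l : List (List A)} {z : List A}
    (hl : ∀ m ∈ l, M.pathIn X' r m r) (hz : M.pathIn X' r z q) :
    ∃ ρ : ℕ → M.Q, ρ 0 = r ∧ ρ (l.flatten ++ z).length = q ∧ NRun M (l.flatten ++ z) ρ ∧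
      ∀ i ≤ (l.flatten ++ z).length, (ρ i = r ↔ ∃ k ≤ l.length, i = cutlen l k) := by
  obtain ⟨ρ2, h20, h2e, h2r, h2i⟩ := pathIn_to_run hz
  have hzne : z ≠ [] := pathIn_ne_nil hz
  rcases eq_or_ne l [] with rfl | hlne
  · refine ⟨ρ2, h20, by simpa using h2e, by simpa using h2r, ?_⟩
    intro i hi
    simp only [List.flatten_nil, List.nil_append, List.length_nil] at hi ⊢
    constructor
    · intro hir
      rcases Nat.eq_zero_or_pos i with h0 | h0
      · exact ⟨0, by simp, by simp [h0, cutlen_zero]⟩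
      · rcases lt_or_eq_of_le hi with hlt | heq
        · exact absurd (hir ▸ h2i i h0 hlt) hrX
        · subst heq; rw [h2e] at hir; exact absurd hir.symm hrq
    · rintro ⟨k, hk, rfl⟩
      simp only [List.length_nil, Nat.le_zero] at hk
      subst hk; simpa [cutlen_zero] using h20
  · obtain ⟨ρ1, h10, h1r, h1c⟩ := runFl hrX hlne hl
    have h1e : ρ1 l.flatten.length = r := by
      rw [h1c l.flatten.length le_rfl]
      exact ⟨l.length, le_rfl, (cutlen_full l).symm⟩
    have hb : ρ1 l.flatten.length = ρ2 0 := by rw [h1e, h20]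
    refine ⟨glue l.flatten.length ρ1 ρ2, by rw [glue_left hb (by omega)]; exact h10, ?_,
      glue_run h1r h2r hb, ?_⟩
    · rw [List.length_append, glue_right (by omega)]
      simpa using h2e
    · intro i hi
      simp only [List.length_append] at hi
      by_cases hlt : i < l.flatten.length
      · rw [glue_left hb (le_of_lt hlt)]
        exact h1c i (le_of_lt hlt)
      · have hge : l.flatten.length ≤ i := by omega
        rw [glue_right hge]
        constructor
        · intro hir
          rcases eq_or_lt_of_le hge with heq | hgt
          · exact ⟨l.length, le_rfl, by rw [← heq]; exact (cutlen_full l).symm⟩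
          · exfalso
            rcases lt_or_eq_of_le hi with hlt2 | heq2
            · exact hrX (hir ▸ h2i (i - l.flatten.length) (by omega) (by omega))
            · have : i - l.flatten.length = z.length := by omega
              rw [this, h2e] at hir
              exact hrq hir.symm
        · rintro ⟨k, hk, rfl⟩
          have := cutlen_le l k
          have heq : cutlen l k = l.flatten.length := by omega
          rw [heq]
          simpa using h20

lemma runR (hrX : r ∉ X') (hrq : r ≠ q) (hrp : r ≠ p) {u : List A} {l : List (List A)} {z : List A}
    (hu : M.pathIn X' p u r) (hl : ∀ m ∈ l, M.pathIn X' r m r) (hz : M.pathIn X' r z q) :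
    ∃ ρ : ℕ → M.Q, ρ 0 = p ∧ ρ (u ++ (l.flatten ++ z)).length = q ∧
      NRun M (u ++ (l.flatten ++ z)) ρ ∧
      ∀ i ≤ (u ++ (l.flatten ++ z)).length,
        (ρ i = r ↔ ∃ k ≤ l.length, i = u.length + cutlen l k) := by
  obtain ⟨ρ1, h10, h1e, h1r, h1i⟩ := pathIn_to_run hu
  obtain ⟨ρ2, h20, h2e, h2r, h2c⟩ := runL hrX hrq hl hz
  have hb : ρ1 u.length = ρ2 0 := by rw [h1e, h20]
  refine ⟨glue u.length ρ1 ρ2, by rw [glue_left hb (by omega)]; exact h10, ?_,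
    glue_run h1r h2r hb, ?_⟩
  · rw [List.length_append, glue_right (by omega)]
    simpa using h2e
  · intro i hi
    simp only [List.length_append] at hi
    by_cases hlt : i < u.length
    · rw [glue_left hb (le_of_lt hlt)]
      constructor
      · intro hir
        exfalso
        rcases Nat.eq_zero_or_pos i with h0 | h0
        · rw [h0, h10] at hir; exact hrp hir.symm
        · exact hrX (hir ▸ h1i i h0 hlt)
      · rintro ⟨k, hk, he⟩; omega
    · have hge : u.length ≤ i := by omega
      rw [glue_right hge]
      rw [h2c (i - u.length) (by simp only [List.length_append]; omega)]
      constructor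
      · rintro ⟨k, hk, he⟩; exact ⟨k, hk, by omega⟩
      · rintro ⟨k, hk, he⟩; exact ⟨k, hk, by omega⟩

end FlattenRuns

lemma decompose {X X' : Set M.Q} {r : M.Q} (hX' : X' = X \ {r}) (hr : r ∈ X) :
    ∀ {w : List A} {p' q : M.Q}, M.pathIn X p' w q →
      M.pathIn X' p' w q ∨ ∃ (u : List A) (l : List (List A)) (z : List A),
        M.pathIn X' p' u r ∧ (∀ m ∈ l, M.pathIn X' r m r) ∧ M.pathIn X' r z q ∧
        w = u ++ (l.flatten ++ z) := by
  intro w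
  induction w with
  | nil => intro p' q h; simp [Auto.pathIn] at h
  | cons a w' ih =>
    intro p' q h
    cases w' with
    | nil => exact Or.inl h
    | cons b w'' =>
      obtain ⟨t, htX, htr, hrest⟩ := h
      by_cases htr' : t = r
      · subst htr'
        rcases ih hrest with hL | ⟨u2, l2, z, hu2, hl2, hz, heq⟩
        · exact Or.inr ⟨[a], [], b :: w'', htr, by simp, hL, by simp⟩
        · refine Or.inr ⟨[a], u2 :: l2, z, htr, ?_, hz, ?_⟩
          · intro m hm
            rcases List.mem_cons.1 hm with rfl | hm'
            · exact hu2
            · exact hl2 m hm'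
          · simp [heq]
      · have htX' : t ∈ X' := by rw [hX']; exact ⟨htX, htr'⟩
        rcases ih hrest with hL | ⟨u, l, z, hu, hl, hz, heq⟩
        · exact Or.inl (pathIn_cons htr htX' hL)
        · exact Or.inr ⟨a :: u, l, z, pathIn_cons htr htX' hu, hl, hz, by simp [heq]⟩

lemma cuts_ext : ∀ (l l' : List (List A)), l ≠ [] → l' ≠ [] →
    (∀ m ∈ l, m ≠ []) → (∀ m ∈ l', m ≠ []) → l.flatten = l'.flatten →
    (∀ i, (∃ k ≤ l.length, i = cutlen l k) ↔ (∃ k ≤ l'.length, i = cutlen l' k)) →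
    l = l' := by
  intro l
  induction l with
  | nil => intro l' h; exact absurd rfl h
  | cons m t ih =>
    intro l' _ hl'ne hmem hmem' hflat hiff
    cases l' with
    | nil => exact absurd rfl hl'ne
    | cons m' t' =>
      have hmne : m ≠ [] := hmem m (by simp)
      have hm'ne : m' ≠ [] := hmem' m' (by simp)
      -- lengths of heads agree
      have hlen : m.length = m'.length := by
        have h1 : ∃ k ≤ (m' :: t').length, m.length = cutlen (m' :: t') k :=
          (hiff m.length).1 ⟨1, by simp, by rw [cutlen_succ_cons]; simp [cutlen_zero]⟩
        have h2 : ∃ k ≤ (m :: t).length, m'.length = cutlen (m :: t) k :=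
          (hiff m'.length).2 ⟨1, by simp, by rw [cutlen_succ_cons]; simp [cutlen_zero]⟩
        obtain ⟨k1, hk1, he1⟩ := h1
        obtain ⟨k2, hk2, he2⟩ := h2
        cases k1 with
        | zero =>
          rw [cutlen_zero] at he1
          exact absurd (List.length_eq_zero_iff.1 he1) hmne
        | succ j1 =>
          cases k2 with
          | zero =>
            rw [cutlen_zero] at he2
            exact absurd (List.length_eq_zero_iff.1 he2) hm'ne
          | succ j2 =>
            rw [cutlen_succ_cons] at he1 he2
            omega
      simp only [List.flatten_cons] at hflat
      obtain ⟨hm, hrest⟩ := List.append_inj hflat hlen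
      subst hm
      cases t with
      | nil =>
        have : t' = [] := by
          apply eq_nil_of_flatten_eq_nil (fun x hx => hmem' x (by simp [hx]))
          simpa using hrest.symm
        rw [this]
      | cons c t2 =>
        have htne : (c :: t2 : List (List A)) ≠ [] := by simp
        have ht'ne : t' ≠ [] := by
          intro hc
          subst hc
          simp only [List.flatten_nil] at hrest
          exact flatten_ne_nil htne (fun x hx => hmem x (by simp [hx])) hrest
        have hrec := ih t' htne ht'ne (fun x hx => hmem x (by simp [hx]))
          (fun x hx => hmem' x (by simp [hx])) hrest ?_
        · rw [hrec]
        · intro j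
          have key : ∀ (mm : List A) (tt : List (List A)), mm ≠ [] →
              ((∃ k ≤ tt.length, j = cutlen tt k) ↔
               (∃ k ≤ (mm :: tt).length, mm.length + j = cutlen (mm :: tt) k)) := by
            intro mm tt hmm
            constructor
            · rintro ⟨k, hk, rfl⟩
              exact ⟨k + 1, by simpa using hk, by rw [cutlen_succ_cons]⟩
            · rintro ⟨k, hk, he⟩
              cases k with
              | zero =>
                rw [cutlen_zero] at he
                have : mm.length = 0 := by omega
                exact absurd (List.length_eq_zero_iff.1 this) hmm
              | succ j2 =>
                rw [cutlen_succ_cons] at he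
                exact ⟨j2, by simpa using hk, by omega⟩
          rw [key m (c :: t2) hmne, key m t' hmne, ← hlen, hiff (m.length + j)]

/-- Reducedness hypothesis. -/
def Reduced (M : Auto A) : Prop :=
  ∀ q : M.Q,
    (∃ (w : List A) (ρ : Fin (w.length + 1) → M.Q),
      w ≠ [] ∧ M.FinAccRun w ρ ∧ ∃ i, ρ i = q) ∨
    (∃ (w : ℕ → A) (ρ : ℕ → M.Q), M.InfAccRun w ρ ∧ ∃ i, ρ i = q)

lemma reach (hred : Reduced M) (p : M.Q) :
    ∃ (u : List A) (σ : ℕ → M.Q), NRun M u σ ∧ σ 0 = M.init ∧ σ u.length = p := by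
  rcases hred p with ⟨w, ρ, _, ⟨hinit, htr, _⟩, i, hi⟩ | ⟨w, ρ, ⟨hinit, htr, _⟩, i, hi⟩
  · have hile : i.val ≤ w.length := Nat.lt_succ_iff.mp i.isLt
    refine ⟨w.take i.val, fun n => ρ ⟨min n i.val, by omega⟩, ?_, ?_, ?_⟩
    · intro n hn
      have hn' := hn
      simp only [List.length_take] at hn'
      have hni : n < i.val := by omega
      have hnw : n < w.length := by omega
      have e1 : (⟨min n i.val, by omega⟩ : Fin (w.length + 1)) = Fin.castSucc ⟨n, hnw⟩ := by
        apply Fin.ext; simp; omega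
      have e2 : (⟨min (n+1) i.val, by omega⟩ : Fin (w.length + 1)) = Fin.succ ⟨n, hnw⟩ := by
        apply Fin.ext; simp; omega
      have e3 : (w.take i.val)[n]'hn = w[n]'hnw := by simp
      simp only []
      rw [e1, e2, e3]
      exact htr ⟨n, hnw⟩
    · have e : (⟨min 0 i.val, by omega⟩ : Fin (w.length + 1)) = 0 := by
        apply Fin.ext; simp
      simp only []
      rw [e]; exact hinit
    · simp only [List.length_take]
      have e : (⟨min (min i.val w.length) i.val, by omega⟩ : Fin (w.length + 1)) = i := by
        apply Fin.ext; simp; omega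
      rw [e]; exact hi
  · refine ⟨List.ofFn (fun j : Fin i => w j.val), ρ, ?_, hinit, ?_⟩
    · intro n hn
      simp only [List.length_ofFn] at hn
      have : (List.ofFn (fun j : Fin i => w j.val))[n]'(by simpa using hn) = w n := by
        simp
      rw [this]
      exact htr n
    · simp only [List.length_ofFn]
      exact hi

lemma coreach (hred : Reduced M) (q : M.Q) :
    (∃ (v : List A) (τ : ℕ → M.Q), NRun M v τ ∧ τ 0 = q ∧ τ v.length ∈ M.final) ∨
    (∃ (wb : ℕ → A) (τ : ℕ → M.Q), τ 0 = q ∧ (∀ i, M.trans (τ i) (wb i) (τ (i + 1))) ∧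
      ∀ n, ∃ m, n ≤ m ∧ τ m ∈ M.rep) := by
  rcases hred q with ⟨w, ρ, _, ⟨_, htr, hfin⟩, i, hi⟩ | ⟨w, ρ, ⟨_, htr, hrep⟩, i, hi⟩
  · left
    have hile : i.val ≤ w.length := Nat.lt_succ_iff.mp i.isLt
    refine ⟨w.drop i.val, fun n => ρ ⟨min (i.val + n) w.length, by omega⟩, ?_, ?_, ?_⟩
    · intro n hn
      have hn' := hn
      simp only [List.length_drop] at hn'
      have hnw : i.val + n < w.length := by omega
      have e1 : (⟨min (i.val + n) w.length, by omega⟩ : Fin (w.length + 1)) =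
          Fin.castSucc ⟨i.val + n, hnw⟩ := by apply Fin.ext; simp; omega
      have e2 : (⟨min (i.val + (n+1)) w.length, by omega⟩ : Fin (w.length + 1)) =
          Fin.succ ⟨i.val + n, hnw⟩ := by apply Fin.ext; simp; omega
      have e3 : (w.drop i.val)[n]'hn = w[i.val + n]'hnw := by simp
      simp only []
      rw [e1, e2, e3]
      exact htr ⟨i.val + n, hnw⟩
    · have e : (⟨min (i.val + 0) w.length, by omega⟩ : Fin (w.length + 1)) = i := by
        apply Fin.ext; simp; omega
      simp only []
      rw [e]; exact hi
    · simp only [List.length_drop]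
      have e : (⟨min (i.val + (w.length - i.val)) w.length, by omega⟩ : Fin (w.length + 1)) =
          Fin.last w.length := by apply Fin.ext; simp [Fin.last]; omega
      rw [e]; exact hfin
  · right
    refine ⟨fun n => w (i + n), fun n => ρ (i + n), hi, ?_, ?_⟩
    · intro n
      have e : i + (n + 1) = (i + n) + 1 := by omega
      show M.trans (ρ (i + n)) (w (i + n)) (ρ (i + (n + 1)))
      rw [e]
      exact htr (i + n)
    · intro n
      obtain ⟨m, hm, hmem⟩ := hrep (i + n)
      refine ⟨m - i, by omega, ?_⟩
      show ρ (i + (m - i)) ∈ M.rep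
      have e : i + (m - i) = m := by omega
      rw [e]; exact hmem

/-- Glued function for accepting-run construction. -/
def piF (nu nw : ℕ) (σ ρ τ : ℕ → M.Q) : ℕ → M.Q :=
  fun n => if n < nu then σ n else if n ≤ nu + nw then ρ (n - nu) else τ (n - nu - nw)

lemma piF_eval {nu nw : ℕ} {σ ρ τ : ℕ → M.Q} (h1 : σ nu = ρ 0) (h2 : ρ nw = τ 0) :
    (∀ m ≤ nu, piF nu nw σ ρ τ m = σ m) ∧
    (∀ m, nu ≤ m → m ≤ nu + nw → piF nu nw σ ρ τ m = ρ (m - nu)) ∧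
    (∀ m, nu + nw ≤ m → piF nu nw σ ρ τ m = τ (m - nu - nw)) := by
  unfold piF
  refine ⟨?_, ?_, ?_⟩
  · intro m hm
    rcases lt_or_eq_of_le hm with h | h
    · simp [h]
    · subst h
      simp only [lt_irrefl, if_false, le_add_iff_nonneg_right, Nat.zero_le, if_true,
        Nat.sub_self]
      exact h1.symm
  · intro m hma hmb
    rw [if_neg (by omega), if_pos hmb]
  · intro m hm
    rw [if_neg (by omega)]
    by_cases hm2 : m ≤ nu + nw
    · have hm3 : m = nu + nw := by omega
      subst hm3
      rw [if_pos le_rfl]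
      have e1 : nu + nw - nu = nw := by omega
      have e2 : nu + nw - nu - nw = 0 := by omega
      rw [e1]
      simpa using h2
    · rw [if_neg hm2]

lemma run_unique (hG1 : M.G1) (hred : Reduced M) {p q : M.Q} {w : List A} (hw : w ≠ [])
    {ρ1 ρ2 : ℕ → M.Q} (h1 : NRun M w ρ1) (h1a : ρ1 0 = p) (h1b : ρ1 w.length = q)
    (h2 : NRun M w ρ2) (h2a : ρ2 0 = p) (h2b : ρ2 w.length = q) :
    ∀ k ≤ w.length, ρ1 k = ρ2 k := by
  intro k hk
  obtain ⟨u, σ, hσr, hσ0, hσe⟩ := reach hred p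
  have hwpos : 0 < w.length := List.length_pos_iff.mpr hw
  rcases coreach hred q with ⟨v, τ, hτr, hτ0, hτe⟩ | ⟨wb, τ, hτ0, hτr, hτrep⟩
  · -- glue into a finite accepting run
    set W := u ++ (w ++ v) with hW
    have hWlen : W.length = u.length + w.length + v.length := by
      simp [hW]; omega
    have hWne : W ≠ [] := by
      simp only [hW]
      intro hc
      rcases List.append_eq_nil_iff.1 hc with ⟨_, h2c⟩
      exact hw (List.append_eq_nil_iff.1 h2c).1
    have hacc : ∀ ρ : ℕ → M.Q, NRun M w ρ → ρ 0 = p → ρ w.length = q →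
        M.FinAccRun W (fun i => piF u.length w.length σ ρ τ i.val) := by
      intro ρ hr ha hb
      obtain ⟨hπ1, hπ2, hπ3⟩ := piF_eval (σ := σ) (ρ := ρ) (τ := τ)
        (by rw [hσe, ha]) (by rw [hb, hτ0])
      refine ⟨?_, ?_, ?_⟩
      · show piF u.length w.length σ ρ τ (0 : Fin (W.length + 1)).val = M.init
        rw [Fin.val_zero, hπ1 0 (Nat.zero_le _), hσ0]
      · intro i
        have hiW : i.val < u.length + w.length + v.length := by rw [← hWlen]; exact i.isLt
        show M.trans (piF u.length w.length σ ρ τ i.val) (W.get i)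
          (piF u.length w.length σ ρ τ (i.val + 1))
        have hgetW : W.get i = W[i.val]'(i.isLt) := rfl
        rcases lt_or_ge i.val u.length with hc1 | hc1
        · rw [hπ1 i.val (le_of_lt hc1), hπ1 (i.val + 1) (by omega)]
          have hg : W[i.val]'(i.isLt) = u[i.val]'hc1 := List.getElem_append_left hc1
          rw [hgetW, hg]
          exact hσr i.val hc1
        · rcases lt_or_ge i.val (u.length + w.length) with hc2 | hc2
          · rw [hπ2 i.val hc1 (by omega), hπ2 (i.val + 1) (by omega) (by omega)]
            have hg : W[i.val]'(i.isLt) = (w ++ v)[i.val - u.length]'(by simp; omega) :=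
              List.getElem_append_right hc1
            have hg2 : (w ++ v)[i.val - u.length]'(by simp; omega) =
                w[i.val - u.length]'(by omega) := List.getElem_append_left (by omega)
            rw [hgetW, hg, hg2]
            have e : i.val + 1 - u.length = (i.val - u.length) + 1 := by omega
            rw [e]
            exact hr (i.val - u.length) (by omega)
          · rw [hπ3 i.val hc2, hπ3 (i.val + 1) (by omega)]
            have hg : W[i.val]'(i.isLt) = (w ++ v)[i.val - u.length]'(by simp; omega) :=
              List.getElem_append_right hc1
            have hg2 : (w ++ v)[i.val - u.length]'(by simp; omega) =
                v[i.val - u.length - w.length]'(by omega) :=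
              List.getElem_append_right (by omega)
            rw [hgetW, hg, hg2]
            have e : i.val + 1 - u.length - w.length = (i.val - u.length - w.length) + 1 := by
              omega
            rw [e]
            exact hτr (i.val - u.length - w.length) (by omega)
      · show piF u.length w.length σ ρ τ (Fin.last W.length).val ∈ M.final
        rw [Fin.val_last, hWlen, hπ3 (u.length + w.length + v.length) (by omega)]
        have e : u.length + w.length + v.length - u.length - w.length = v.length := by omega
        rw [e]
        exact hτe
    obtain ⟨R, -, hRu⟩ := hG1.1 W hWne
    have heq : (fun i : Fin (W.length + 1) => piF u.length w.length σ ρ1 τ i.val) =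
        (fun i : Fin (W.length + 1) => piF u.length w.length σ ρ2 τ i.val) := by
      rw [hRu _ (hacc ρ1 h1 h1a h1b), hRu _ (hacc ρ2 h2 h2a h2b)]
    have := congrFun heq ⟨u.length + k, by omega⟩
    simp only [] at this
    obtain ⟨-, hπ2a, -⟩ := piF_eval (σ := σ) (ρ := ρ1) (τ := τ)
      (by rw [hσe, h1a]) (by rw [h1b, hτ0])
    obtain ⟨-, hπ2b, -⟩ := piF_eval (σ := σ) (ρ := ρ2) (τ := τ)
      (by rw [hσe, h2a]) (by rw [h2b, hτ0])
    rw [hπ2a (u.length + k) (by omega) (by omega), hπ2b (u.length + k) (by omega) (by omega)]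
      at this
    have e : u.length + k - u.length = k := by omega
    rwa [e] at this
  · -- glue into an infinite accepting run
    set Wb : ℕ → A := fun n =>
      if h : n < u.length then u[n]'h
      else if h2 : n - u.length < w.length then w[n - u.length]'h2
      else wb (n - u.length - w.length) with hWb
    have hacc : ∀ ρ : ℕ → M.Q, NRun M w ρ → ρ 0 = p → ρ w.length = q →
        M.InfAccRun Wb (piF u.length w.length σ ρ τ) := by
      intro ρ hr ha hb
      obtain ⟨hπ1, hπ2, hπ3⟩ := piF_eval (σ := σ) (ρ := ρ) (τ := τ)
        (by rw [hσe, ha]) (by rw [hb, hτ0])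
      refine ⟨by rw [hπ1 0 (Nat.zero_le _), hσ0], ?_, ?_⟩
      · intro n
        rcases lt_or_ge n u.length with hc1 | hc1
        · rw [hπ1 n (le_of_lt hc1), hπ1 (n + 1) (by omega)]
          have hg : Wb n = u[n]'hc1 := by rw [hWb]; simp [hc1]
          rw [hg]
          exact hσr n hc1
        · rcases lt_or_ge (n - u.length) w.length with hc2 | hc2
          · rw [hπ2 n hc1 (by omega), hπ2 (n + 1) (by omega) (by omega)]
            have hg : Wb n = w[n - u.length]'hc2 := by
              rw [hWb]; simp only []; rw [dif_neg (by omega), dif_pos hc2]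
            rw [hg]
            have e : n + 1 - u.length = (n - u.length) + 1 := by omega
            rw [e]
            exact hr (n - u.length) hc2
          · rw [hπ3 n (by omega), hπ3 (n + 1) (by omega)]
            have hg : Wb n = wb (n - u.length - w.length) := by
              rw [hWb]; simp only []; rw [dif_neg (by omega), dif_neg (by omega)]
            rw [hg]
            have e : n + 1 - u.length - w.length = (n - u.length - w.length) + 1 := by omega
            rw [e]
            exact hτr (n - u.length - w.length)
      · intro n
        obtain ⟨m, hm, hmem⟩ := hτrep n
        refine ⟨u.length + w.length + m, by omega, ?_⟩
        rw [hπ3 (u.length + w.length + m) (by omega)]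
        have e : u.length + w.length + m - u.length - w.length = m := by omega
        rw [e]
        exact hmem
    obtain ⟨R, -, hRu⟩ := hG1.2 Wb
    have heq : piF u.length w.length σ ρ1 τ = piF u.length w.length σ ρ2 τ := by
      rw [hRu _ (hacc ρ1 h1 h1a h1b), hRu _ (hacc ρ2 h2 h2a h2b)]
    have := congrFun heq (u.length + k)
    obtain ⟨-, hπ2a, -⟩ := piF_eval (σ := σ) (ρ := ρ1) (τ := τ)
      (by rw [hσe, h1a]) (by rw [h1b, hτ0])
    obtain ⟨-, hπ2b, -⟩ := piF_eval (σ := σ) (ρ := ρ2) (τ := τ)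
      (by rw [hσe, h2a]) (by rw [h2b, hτ0])
    rw [hπ2a (u.length + k) (by omega) (by omega), hπ2b (u.length + k) (by omega) (by omega)]
      at this
    have e : u.length + k - u.length = k := by omega
    rwa [e] at this

section Master

variable (hG1 : M.G1) (hred : Reduced M) {X' : Set M.Q} {r p q : M.Q}

include hG1 hred

lemma masterU (hrX : r ∉ X') (hrq : r ≠ q) (hrp : r ≠ p)
    {u u' z z' : List A} {l l' : List (List A)}
    (hu : M.pathIn X' p u r) (hl : ∀ m ∈ l, M.pathIn X' r m r) (hz : M.pathIn X' r z q)
    (hu' : M.pathIn X' p u' r) (hl' : ∀ m ∈ l', M.pathIn X' r m r) (hz' : M.pathIn X' r z' q)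
    (heq : u ++ (l.flatten ++ z) = u' ++ (l'.flatten ++ z')) :
    u = u' ∧ l = l' ∧ z = z' := by
  obtain ⟨ρ, hρ0, hρe, hρr, hρc⟩ := runR hrX hrq hrp hu hl hz
  obtain ⟨ρ', hρ'0, hρ'e, hρ'r, hρ'c⟩ := runR hrX hrq hrp hu' hl' hz'
  rw [← heq] at hρ'e hρ'r hρ'c
  have hwne : u ++ (l.flatten ++ z) ≠ [] := by
    intro hc
    exact pathIn_ne_nil hu (List.append_eq_nil_iff.1 hc).1
  have hkey := run_unique hG1 hred hwne hρr hρ0 hρe hρ'r hρ'0 hρ'e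
  have hwlen : (u ++ (l.flatten ++ z)).length = u.length + (l.flatten.length + z.length) := by
    simp
  have hlen' : (u ++ (l.flatten ++ z)).length =
      u'.length + (l'.flatten.length + z'.length) := by
    rw [heq]; simp
  have hV : ∀ i ≤ (u ++ (l.flatten ++ z)).length,
      ((∃ k ≤ l.length, i = u.length + cutlen l k) ↔
       (∃ k ≤ l'.length, i = u'.length + cutlen l' k)) := by
    intro i hi
    rw [← hρc i hi, hkey i hi, hρ'c i hi]
  -- heads have equal length
  have hul : u.length = u'.length := by
    have h1 := (hV u.length (by omega)).1 ⟨0, Nat.zero_le _, by simp [cutlen_zero]⟩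
    have h2 := (hV u'.length (by omega)).2 ⟨0, Nat.zero_le _, by simp [cutlen_zero]⟩
    obtain ⟨k1, -, he1⟩ := h1
    obtain ⟨k2, -, he2⟩ := h2
    omega
  obtain ⟨huu, hrest⟩ := List.append_inj heq hul
  -- flatten parts have equal length
  have hfl : l.flatten.length = l'.flatten.length := by
    have h1 := (hV (u.length + l.flatten.length) (by omega)).1
      ⟨l.length, le_rfl, by simp [cutlen_full]⟩
    have h2 := (hV (u'.length + l'.flatten.length) (by omega)).2
      ⟨l'.length, le_rfl, by simp [cutlen_full]⟩
    obtain ⟨k1, hk1, he1⟩ := h1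
    obtain ⟨k2, hk2, he2⟩ := h2
    have hc1 := cutlen_le l' k1
    have hc2 := cutlen_le l k2
    omega
  obtain ⟨hff, hzz⟩ := List.append_inj hrest hfl
  refine ⟨huu, ?_, hzz⟩
  have hmem : ∀ m ∈ l, m ≠ [] := fun m hm => pathIn_ne_nil (hl m hm)
  have hmem' : ∀ m ∈ l', m ≠ [] := fun m hm => pathIn_ne_nil (hl' m hm)
  rcases eq_or_ne l [] with rfl | hlne
  · have : l'.flatten = [] := by rw [← hff]; simp
    rw [eq_nil_of_flatten_eq_nil hmem' this]
  · have hl'ne : l' ≠ [] := by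
      intro hc
      subst hc
      simp only [List.flatten_nil, List.length_nil] at hfl
      exact hlne (eq_nil_of_flatten_eq_nil hmem (List.length_eq_zero_iff.1 hfl))
    refine cuts_ext l l' hlne hl'ne hmem hmem' hff ?_
    intro i0
    by_cases hle : i0 ≤ l.flatten.length
    · have := hV (u.length + i0) (by omega)
      constructor
      · rintro ⟨k, hk, rfl⟩
        obtain ⟨k', hk', he'⟩ := this.1 ⟨k, hk, rfl⟩
        exact ⟨k', hk', by omega⟩
      · rintro ⟨k, hk, rfl⟩
        obtain ⟨k', hk', he'⟩ := this.2 ⟨k, hk, by omega⟩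
        exact ⟨k', hk', by omega⟩
    · constructor
      · rintro ⟨k, hk, rfl⟩
        exact absurd (cutlen_le l k) (by omega)
      · rintro ⟨k, hk, rfl⟩
        exact absurd (cutlen_le l' k) (by omega)

lemma masterF0 (hrX : r ∉ X') (hrq : r ≠ q) (hrp : r ≠ p)
    {u z : List A} {l : List (List A)} {w : List A}
    (hu : M.pathIn X' p u r) (hl : ∀ m ∈ l, M.pathIn X' r m r) (hz : M.pathIn X' r z q)
    (hw : M.pathIn X' p w q) (heq : w = u ++ (l.flatten ++ z)) : False := by
  obtain ⟨ρ0, h00, h0e, h0r, h0i⟩ := pathIn_to_run hw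
  obtain ⟨ρ, hρ0, hρe, hρr, hρc⟩ := runR hrX hrq hrp hu hl hz
  rw [← heq] at hρe hρr hρc
  have hwne : w ≠ [] := pathIn_ne_nil hw
  have hkey := run_unique hG1 hred hwne h0r h00 h0e hρr hρ0 hρe
  have hwlen : w.length = u.length + (l.flatten.length + z.length) := by rw [heq]; simp
  have hupos : 0 < u.length := List.length_pos_iff.mpr (pathIn_ne_nil hu)
  have hzpos : 0 < z.length := List.length_pos_iff.mpr (pathIn_ne_nil hz)
  have hvr : ρ u.length = r := by
    rw [hρc u.length (by omega)]
    exact ⟨0, Nat.zero_le _, by simp [cutlen_zero]⟩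
  have : ρ0 u.length = r := by rw [hkey u.length (by omega)]; exact hvr
  exact hrX (this ▸ h0i u.length hupos (by omega))

lemma masterR (hrX : r ∉ X') (hrq : r ≠ q)
    {z z' : List A} {l l' : List (List A)}
    (hl : ∀ m ∈ l, M.pathIn X' r m r) (hz : M.pathIn X' r z q)
    (hl' : ∀ m ∈ l', M.pathIn X' r m r) (hz' : M.pathIn X' r z' q)
    (heq : l.flatten ++ z = l'.flatten ++ z') :
    l.flatten = l'.flatten ∧ z = z' := by
  obtain ⟨ρ, hρ0, hρe, hρr, hρc⟩ := runL hrX hrq hl hz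
  obtain ⟨ρ', hρ'0, hρ'e, hρ'r, hρ'c⟩ := runL hrX hrq hl' hz'
  rw [← heq] at hρ'e hρ'r hρ'c
  have hwne : l.flatten ++ z ≠ [] := by
    intro hc
    exact pathIn_ne_nil hz (List.append_eq_nil_iff.1 hc).2
  have hkey := run_unique hG1 hred hwne hρr hρ0 hρe hρ'r hρ'0 hρ'e
  have hwlen : (l.flatten ++ z).length = l.flatten.length + z.length := by simp
  have hlen' : (l.flatten ++ z).length = l'.flatten.length + z'.length := by rw [heq]; simp
  have hV : ∀ i ≤ (l.flatten ++ z).length,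
      ((∃ k ≤ l.length, i = cutlen l k) ↔ (∃ k ≤ l'.length, i = cutlen l' k)) := by
    intro i hi
    rw [← hρc i hi, hkey i hi, hρ'c i hi]
  have hfl : l.flatten.length = l'.flatten.length := by
    have h1 := (hV l.flatten.length (by omega)).1 ⟨l.length, le_rfl, (cutlen_full l).symm⟩
    have h2 := (hV l'.flatten.length (by omega)).2 ⟨l'.length, le_rfl, (cutlen_full l').symm⟩
    obtain ⟨k1, hk1, he1⟩ := h1
    obtain ⟨k2, hk2, he2⟩ := h2
    have hc1 := cutlen_le l' k1
    have hc2 := cutlen_le l k2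
    omega
  exact List.append_inj heq hfl

lemma masterFl (hrX : r ∉ X')
    {l l' : List (List A)} (hl : ∀ m ∈ l, M.pathIn X' r m r)
    (hl' : ∀ m ∈ l', M.pathIn X' r m r) (hlne : l ≠ []) (hl'ne : l' ≠ [])
    (heq : l.flatten = l'.flatten) : l = l' := by
  have hmem : ∀ m ∈ l, m ≠ [] := fun m hm => pathIn_ne_nil (hl m hm)
  have hmem' : ∀ m ∈ l', m ≠ [] := fun m hm => pathIn_ne_nil (hl' m hm)
  obtain ⟨ρ, hρ0, hρr, hρc⟩ := runFl hrX hlne hl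
  obtain ⟨ρ', hρ'0, hρ'r, hρ'c⟩ := runFl hrX hl'ne hl'
  rw [← heq] at hρ'r hρ'c
  have hwne : l.flatten ≠ [] := flatten_ne_nil hlne hmem
  have hρe : ρ l.flatten.length = r := by
    rw [hρc _ le_rfl]; exact ⟨l.length, le_rfl, (cutlen_full l).symm⟩
  have hρ'e : ρ' l.flatten.length = r := by
    rw [hρ'c _ le_rfl]
    refine ⟨l'.length, le_rfl, ?_⟩
    rw [cutlen_full]
    exact congrArg List.length heq
  have hkey := run_unique hG1 hred hwne hρr hρ0 hρe hρ'r hρ'0 hρ'e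
  have hfl : l.flatten.length = l'.flatten.length := congrArg List.length heq
  refine cuts_ext l l' hlne hl'ne hmem hmem' heq ?_
  intro i
  by_cases hle : i ≤ l.flatten.length
  · rw [← hρc i hle, hkey i hle, hρ'c i hle]
  · constructor
    · rintro ⟨k, hk, rfl⟩
      exact absurd (cutlen_le l k) (by omega)
    · rintro ⟨k, hk, rfl⟩
      exact absurd (cutlen_le l' k) (by omega)

end Master

section RELemmas

variable {S : Type} [Semigroup S] {φ : List A → S}

def bigU : List (RE A) → RE A
  | [] => RE.zero
  | e :: t => RE.union e (bigU t)

lemma bigU_lang : ∀ l : List (RE A), (bigU l).lang = {w | ∃ e ∈ l, w ∈ e.lang}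
  | [] => by simp [bigU, RE.lang]
  | e :: t => by
    simp only [bigU, RE.lang, bigU_lang t]
    ext w
    simp

lemma bigU_epsFree : ∀ l : List (RE A), (∀ e ∈ l, e.epsFree) → (bigU l).epsFree
  | [] => fun _ => by simp [bigU, RE.epsFree]
  | e :: t => fun h => by
    refine ⟨h e (by simp), bigU_epsFree t fun f hf => h f (by simp [hf])⟩

lemma good_zero (s : S) : (RE.zero : RE A).Good φ := by
  refine ⟨trivial, ?_, ?_⟩
  · intro E hE
    cases hE
    exact ⟨s, fun w hw => absurd hw (by simp [RE.lang])⟩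
  · intro E hE
    cases hE

lemma good_char (a : A) : (RE.char a).Good φ := by
  refine ⟨trivial, ?_, ?_⟩
  · intro E hE
    cases hE
    exact ⟨φ [a], fun w hw => by simp [RE.lang] at hw; rw [hw]⟩
  · intro E hE
    cases hE

lemma good_union {F G : RE A} (hF : F.Good φ) (hG : G.Good φ)
    (hdisj : F.lang ∩ G.lang = ∅)
    (hval : ∃ s : S, ∀ w ∈ (RE.union F G).lang, φ w = s) : (RE.union F G).Good φ := by
  refine ⟨⟨hF.1, hG.1, hdisj⟩, ?_, ?_⟩
  · intro E hE
    cases hE with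
    | refl => exact hval
    | unionL h => exact hF.2.1 E h
    | unionR h => exact hG.2.1 E h
  · intro E hE
    cases hE with
    | unionL h => exact hF.2.2 E h
    | unionR h => exact hG.2.2 E h

lemma good_bigU (s : S) : ∀ l : List (RE A), (∀ e ∈ l, e.Good φ) →
    (∀ e ∈ l, ∀ w ∈ e.lang, φ w = s) →
    l.Pairwise (fun e f => e.lang ∩ f.lang = ∅) → (bigU l).Good φ
  | [] => fun _ _ _ => good_zero s
  | e :: t => fun hg hval hdisj => by
    obtain ⟨hhead, htail⟩ := List.pairwise_cons.1 hdisj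
    refine good_union (hg e (by simp))
      (good_bigU s t (fun f hf => hg f (by simp [hf]))
        (fun f hf => hval f (by simp [hf])) htail) ?_ ?_
    · ext w
      simp only [Set.mem_inter_iff, bigU_lang, Set.mem_setOf_eq, Set.mem_empty_iff_false,
        iff_false, not_and]
      rintro hw ⟨f, hf, hwf⟩
      have := hhead f hf
      have : w ∈ e.lang ∩ f.lang := ⟨hw, hwf⟩
      rw [hhead f hf] at this
      exact this
    · refine ⟨s, ?_⟩
      intro w hw
      rcases hw with hw | hw
      · exact hval e (by simp) w hw
      · rw [bigU_lang] at hw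
        obtain ⟨f, hf, hwf⟩ := hw
        exact hval f (by simp [hf]) w hwf

lemma good_cat {F G : RE A} (hF : F.Good φ) (hG : G.Good φ)
    (huniq : ∀ u v u' v', u ∈ F.lang → v ∈ G.lang → u' ∈ F.lang → v' ∈ G.lang →
      u ++ v = u' ++ v' → u = u' ∧ v = v')
    (hval : ∃ s : S, ∀ w ∈ (RE.cat F G).lang, φ w = s) : (RE.cat F G).Good φ := by
  refine ⟨⟨hF.1, hG.1, huniq⟩, ?_, ?_⟩
  · intro E hE
    cases hE with
    | refl => exact hval
    | catL h => exact hF.2.1 E h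
    | catR h => exact hG.2.1 E h
  · intro E hE
    cases hE with
    | catL h => exact hF.2.2 E h
    | catR h => exact hG.2.2 E h

lemma phi_flatten (hφ : ∀ u v : List A, u ≠ [] → v ≠ [] → φ (u ++ v) = φ u * φ v)
    {e : S} (he : e * e = e) :
    ∀ l : List (List A), l ≠ [] → (∀ m ∈ l, φ m = e ∧ m ≠ []) → φ l.flatten = e := by
  intro l
  induction l with
  | nil => intro h; exact absurd rfl h
  | cons m t ih =>
    intro _ hmem
    obtain ⟨hme, hmne⟩ := hmem m (by simp)
    cases t with
    | nil => simpa using hme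
    | cons m2 t2 =>
      have htne : (m2 :: t2 : List (List A)) ≠ [] := by simp
      have hmem' : ∀ x ∈ m2 :: t2, φ x = e ∧ x ≠ [] := fun x hx => hmem x (by simp [hx])
      have hfl : (m2 :: t2 : List (List A)).flatten ≠ [] :=
        flatten_ne_nil htne (fun x hx => (hmem' x hx).2)
      rw [List.flatten_cons, hφ m _ hmne hfl, hme, ih htne hmem', he]

lemma good_plus {F : RE A} (hφ : ∀ u v : List A, u ≠ [] → v ≠ [] → φ (u ++ v) = φ u * φ v)
    (hF : F.Good φ) {e : S} (he : e * e = e) (hval : ∀ w ∈ F.lang, φ w = e)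
    (hne : ∀ w ∈ F.lang, w ≠ [])
    (huniq : ∀ l l' : List (List A), l ≠ [] → l' ≠ [] → (∀ u ∈ l, u ∈ F.lang) →
      (∀ u ∈ l', u ∈ F.lang) → l.flatten = l'.flatten → l = l') :
    (RE.plus F).Good φ := by
  have hplusval : ∀ w ∈ (RE.plus F).lang, φ w = e := by
    rintro w ⟨l, hlne, hmem, rfl⟩
    exact phi_flatten hφ he l hlne (fun m hm => ⟨hval m (hmem m hm), hne m (hmem m hm)⟩)
  refine ⟨⟨hF.1, huniq⟩, ?_, ?_⟩
  · intro E hE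
    cases hE with
    | refl => exact ⟨e, hplusval⟩
    | plus h => exact hF.2.1 E h
  · intro E hE
    cases hE with
    | refl => exact ⟨e, he, hval⟩
    | plus h => exact hF.2.2 _ h

end RELemmas

lemma pathIn_flatten {X X' : Set M.Q} {r : M.Q} (hsub : X' ⊆ X) (hr : r ∈ X) :
    ∀ l : List (List A), l ≠ [] → (∀ m ∈ l, M.pathIn X' r m r) →
    M.pathIn X r l.flatten r := by
  intro l
  induction l with
  | nil => intro h; exact absurd rfl h
  | cons m t ih =>
    intro _ hmem
    cases t with
    | nil =>
      simpa using pathIn_mono hsub (hmem m (by simp))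
    | cons m2 t2 =>
      rw [List.flatten_cons]
      exact pathIn_append (hmem m (by simp))
        (ih (by simp) (fun x hx => hmem x (by simp [hx]))) hr hsub (le_refl X)

lemma pathIn_empty {p q : M.Q} {w : List A} :
    M.pathIn (∅ : Set M.Q) p w q ↔ ∃ a, w = [a] ∧ M.trans p a q := by
  constructor
  · intro h
    cases w with
    | nil => simp [Auto.pathIn] at h
    | cons a t =>
      cases t with
      | nil => exact ⟨a, rfl, h⟩
      | cons b t2 =>
        obtain ⟨x, hx, -, -⟩ := h
        exact absurd hx (by simp)
  · rintro ⟨a, rfl, h⟩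
    exact h

section Main

variable {S : Type} [Semigroup S] [Fintype S] [Fintype A] {φ : List A → S}

lemma main_aux (hφ : ∀ u v : List A, u ≠ [] → v ≠ [] → φ (u ++ v) = φ u * φ v)
    (hG1 : M.G1) (hG2 : M.G2 φ) (hred : Reduced M) :
    ∀ (n : ℕ) (X : Set M.Q), X.ncard = n → ∀ (p q : M.Q) (s : S),
      (∀ x ∈ X, M.slt x p ∧ M.slt x q) →
      ∃ F : RE A, F.epsFree ∧ F.Good φ ∧
        F.lang = {w : List A | w ∈ M.Lset X p q ∧ φ w = s} := by
  letI := M.fin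
  letI := M.lin
  have hslt : ∀ a b : M.Q, M.slt a b ↔ a < b := fun a b => Iff.rfl
  intro n
  induction n using Nat.strong_induction_on with
  | _ n ih =>
    intro X hXcard p q s hX
    classical
    rcases Set.eq_empty_or_nonempty X with rfl | hne
    · -- base case : single letters
      set fa := (Finset.univ : Finset A).filter (fun a => M.trans p a q ∧ φ [a] = s) with hfa
      refine ⟨bigU (fa.toList.map RE.char), ?_, ?_, ?_⟩
      · exact bigU_epsFree _ (by
          intro E hE
          simp only [List.mem_map] at hE
          obtain ⟨a, -, rfl⟩ := hE
          trivial)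
      · refine good_bigU s _ ?_ ?_ ?_
        · intro E hE
          simp only [List.mem_map] at hE
          obtain ⟨a, -, rfl⟩ := hE
          exact good_char a
        · intro E hE w hw
          simp only [List.mem_map] at hE
          obtain ⟨a, ha, rfl⟩ := hE
          simp only [RE.lang, Set.mem_singleton_iff] at hw
          subst hw
          rw [hfa] at ha
          simp only [Finset.mem_toList, Finset.mem_filter] at ha
          exact ha.2.2
        · rw [List.pairwise_map]
          refine List.Pairwise.imp ?_ fa.nodup_toList
          intro a b hab
          ext w
          simp only [RE.lang, Set.mem_inter_iff, Set.mem_singleton_iff,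
            Set.mem_empty_iff_false, iff_false, not_and]
          rintro rfl h
          exact hab (by injection h)
      · rw [bigU_lang]
        ext w
        simp only [Set.mem_setOf_eq, List.mem_map, Auto.Lset]
        constructor
        · rintro ⟨E, ⟨a, ha, rfl⟩, hw⟩
          simp only [RE.lang, Set.mem_singleton_iff] at hw
          subst hw
          rw [hfa] at ha
          simp only [Finset.mem_toList, Finset.mem_filter] at ha
          exact ⟨pathIn_empty.2 ⟨a, rfl, ha.2.1⟩, ha.2.2⟩
        · rintro ⟨hpath, hval⟩
          obtain ⟨a, rfl, htr⟩ := pathIn_empty.1 hpath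
          refine ⟨RE.char a, ⟨a, ?_, rfl⟩, by simp [RE.lang]⟩
          rw [hfa]
          simp only [Finset.mem_toList, Finset.mem_filter]
          exact ⟨Finset.mem_univ a, htr, hval⟩
    · -- inductive step
      have hXfin : X.Finite := Set.toFinite X
      obtain ⟨r, hrX, hrmax⟩ : ∃ r ∈ X, ∀ a' ∈ X, id r ≤ id a' → id r = id a' := by
        obtain ⟨r, hr⟩ := hXfin.exists_maximal hne
        exact ⟨r, hr.1, fun a' ha' h => hr.eq_of_le ha' h⟩
      simp only [id] at hrmax
      set X' := X \ {r} with hX'def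
      have hrp : r ≠ p := by
        intro hc
        have := (hX r hrX).1
        rw [hslt, hc] at this
        exact lt_irrefl p this
      have hrq : r ≠ q := by
        intro hc
        have := (hX r hrX).2
        rw [hslt, hc] at this
        exact lt_irrefl q this
      have hrnX' : r ∉ X' := by simp [hX'def]
      have hX'sub : X' ⊆ X := Set.diff_subset
      have hX'r : ∀ x ∈ X', M.slt x r := by
        intro x hx
        obtain ⟨hxX, hxr⟩ := hx
        rw [hslt]
        rcases lt_or_ge x r with h | h
        · exact h
        · exact absurd (hrmax x hxX h).symm (by simpa using hxr)
      have hXbelow : X' ⊆ M.below r := fun x hx => hX'r x hx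
      have hcard : X'.ncard < n := by
        rw [← hXcard]
        exact Set.ncard_diff_singleton_lt_of_mem hrX hXfin
      have ihX' := ih X'.ncard hcard X' rfl
      -- expressions from the induction hypothesis
      have hEprE : ∀ s1 : S, ∃ F : RE A, F.epsFree ∧ F.Good φ ∧
          F.lang = {w : List A | w ∈ M.Lset X' p r ∧ φ w = s1} :=
        fun s1 => ihX' p r s1 (fun x hx => ⟨(hX x (hX'sub hx)).1, hX'r x hx⟩)
      choose Epr hEpr1 hEpr2 hEpr3 using hEprE
      have hErqE : ∀ s2 : S, ∃ F : RE A, F.epsFree ∧ F.Good φ ∧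
          F.lang = {w : List A | w ∈ M.Lset X' r q ∧ φ w = s2} :=
        fun s2 => ihX' r q s2 (fun x hx => ⟨hX'r x hx, (hX x (hX'sub hx)).2⟩)
      choose Erq hErq1 hErq2 hErq3 using hErqE
      obtain ⟨F0, hF01, hF02, hF03⟩ := ihX' p q s (fun x hx => hX x (hX'sub hx))
      obtain ⟨e, he, heval⟩ := hG2 r
      have hloopval : ∀ w : List A, M.pathIn X' r w r → φ w = e := by
        intro w hw
        exact heval w (pathIn_mono hXbelow hw)
      obtain ⟨EL, hEL1, hEL2, hEL3⟩ := ihX' r r e (fun x hx => ⟨hX'r x hx, hX'r x hx⟩)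
      -- membership characterizations
      have hEprP : ∀ s1 w, w ∈ (Epr s1).lang ↔ M.pathIn X' p w r ∧ φ w = s1 := by
        intro s1 w
        rw [hEpr3 s1]
        simp [Auto.Lset]
      have hErqP : ∀ s2 w, w ∈ (Erq s2).lang ↔ M.pathIn X' r w q ∧ φ w = s2 := by
        intro s2 w
        rw [hErq3 s2]
        simp [Auto.Lset]
      have hF0P : ∀ w, w ∈ F0.lang ↔ M.pathIn X' p w q ∧ φ w = s := by
        intro w
        rw [hF03]
        simp [Auto.Lset]
      have hELP : ∀ w, w ∈ EL.lang ↔ M.pathIn X' r w r := by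
        intro w
        rw [hEL3]
        simp only [Auto.Lset, Set.mem_setOf_eq]
        exact ⟨fun h => h.1, fun h => ⟨h, hloopval w h⟩⟩
      -- the plus-language characterization
      have hplusP : ∀ w, w ∈ (RE.plus EL).lang ↔
          ∃ l : List (List A), l ≠ [] ∧ (∀ m ∈ l, M.pathIn X' r m r) ∧ w = l.flatten := by
        intro w
        constructor
        · rintro ⟨l, hlne, hmem, rfl⟩
          exact ⟨l, hlne, fun m hm => (hELP m).1 (hmem m hm), rfl⟩
        · rintro ⟨l, hlne, hmem, rfl⟩
          exact ⟨l, hlne, fun m hm => (hELP m).2 (hmem m hm), rfl⟩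
      set pairs1 := ((Finset.univ : Finset (S × S)).filter (fun t => t.1 * t.2 = s)).toList
        with hpairs1
      set pairs2 := ((Finset.univ : Finset (S × S)).filter (fun t => t.1 * e * t.2 = s)).toList
        with hpairs2
      set c1 : S × S → RE A := fun t => RE.cat (Epr t.1) (Erq t.2) with hc1
      set c2 : S × S → RE A := fun t =>
        RE.cat (Epr t.1) (RE.cat (RE.plus EL) (Erq t.2)) with hc2
      -- membership characterization of the two cat shapes
      have hc1P : ∀ t (w : List A), w ∈ (c1 t).lang ↔
          ∃ u v, (M.pathIn X' p u r ∧ φ u = t.1) ∧ (M.pathIn X' r v q ∧ φ v = t.2) ∧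
            w = u ++ v := by
        intro t w
        constructor
        · rintro ⟨u, v, hu, hv, rfl⟩
          exact ⟨u, v, (hEprP t.1 u).1 hu, (hErqP t.2 v).1 hv, rfl⟩
        · rintro ⟨u, v, hu, hv, rfl⟩
          exact ⟨u, v, (hEprP t.1 u).2 hu, (hErqP t.2 v).2 hv, rfl⟩
      have hc2P : ∀ t (w : List A), w ∈ (c2 t).lang ↔
          ∃ (u : List A) (l : List (List A)) (z : List A), (M.pathIn X' p u r ∧ φ u = t.1) ∧ l ≠ [] ∧
            (∀ m ∈ l, M.pathIn X' r m r) ∧ (M.pathIn X' r z q ∧ φ z = t.2) ∧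
            w = u ++ (l.flatten ++ z) := by
        intro t w
        constructor
        · rintro ⟨u, v, hu, ⟨m, z, hm, hz, rfl⟩, rfl⟩
          obtain ⟨l, hlne, hmem, rfl⟩ := (hplusP m).1 hm
          exact ⟨u, l, z, (hEprP t.1 u).1 hu, hlne, hmem, (hErqP t.2 z).1 hz, by simp⟩
        · rintro ⟨u, l, z, hu, hlne, hmem, hz, rfl⟩
          exact ⟨u, l.flatten ++ z, (hEprP t.1 u).2 hu,
            ⟨l.flatten, z, (hplusP l.flatten).2 ⟨l, hlne, hmem, rfl⟩,
              (hErqP t.2 z).2 hz, rfl⟩, rfl⟩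
      -- goodness of the branches
      have hgood1 : ∀ t ∈ pairs1, (c1 t).Good φ := by
        intro t ht
        rw [hpairs1] at ht
        simp only [Finset.mem_toList, Finset.mem_filter] at ht
        refine good_cat (hEpr2 t.1) (hErq2 t.2) ?_ ?_
        · intro u v u' v' hu hv hu' hv' heqq
          obtain ⟨hup, -⟩ := (hEprP t.1 u).1 hu
          obtain ⟨hvp, -⟩ := (hErqP t.2 v).1 hv
          obtain ⟨hup', -⟩ := (hEprP t.1 u').1 hu'
          obtain ⟨hvp', -⟩ := (hErqP t.2 v').1 hv'
          have := masterU hG1 hred hrnX' hrq hrp hup (l := []) (by simp) hvp hup'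
            (l' := []) (by simp) hvp' (by simpa using heqq)
          exact ⟨this.1, this.2.2⟩
        · refine ⟨s, ?_⟩
          rintro w ⟨u, v, hu, hv, rfl⟩
          obtain ⟨hup, hu1⟩ := (hEprP t.1 u).1 hu
          obtain ⟨hvp, hv1⟩ := (hErqP t.2 v).1 hv
          rw [hφ u v (pathIn_ne_nil hup) (pathIn_ne_nil hvp), hu1, hv1]
          exact ht.2
      have hgoodplus : (RE.plus EL).Good φ := by
        refine good_plus hφ hEL2 he ?_ ?_ ?_
        · intro w hw
          exact hloopval w ((hELP w).1 hw)
        · intro w hw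
          exact pathIn_ne_nil ((hELP w).1 hw)
        · intro l l' hlne hl'ne hmem hmem' heqq
          exact masterFl hG1 hred hrnX' (fun m hm => (hELP m).1 (hmem m hm))
            (fun m hm => (hELP m).1 (hmem' m hm)) hlne hl'ne heqq
      have hgood2 : ∀ t ∈ pairs2, (c2 t).Good φ := by
        intro t ht
        rw [hpairs2] at ht
        simp only [Finset.mem_toList, Finset.mem_filter] at ht
        have hinner : (RE.cat (RE.plus EL) (Erq t.2)).Good φ := by
          refine good_cat hgoodplus (hErq2 t.2) ?_ ?_
          · intro m z m' z' hm hz hm' hz' heqq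
            obtain ⟨l, hlne, hmem, rfl⟩ := (hplusP m).1 hm
            obtain ⟨l', hl'ne, hmem', rfl⟩ := (hplusP m').1 hm'
            obtain ⟨hzp, -⟩ := (hErqP t.2 z).1 hz
            obtain ⟨hzp', -⟩ := (hErqP t.2 z').1 hz'
            exact masterR hG1 hred hrnX' hrq hmem hzp hmem' hzp' heqq
          · refine ⟨e * t.2, ?_⟩
            rintro w ⟨m, z, hm, hz, rfl⟩
            obtain ⟨l, hlne, hmem, rfl⟩ := (hplusP m).1 hm
            obtain ⟨hzp, hz1⟩ := (hErqP t.2 z).1 hz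
            have hflne : l.flatten ≠ [] :=
              flatten_ne_nil hlne (fun m hm => pathIn_ne_nil (hmem m hm))
            have hfle : φ l.flatten = e := phi_flatten hφ he l hlne
              (fun m hm => ⟨hloopval m (hmem m hm), pathIn_ne_nil (hmem m hm)⟩)
            rw [hφ _ z hflne (pathIn_ne_nil hzp), hfle, hz1]
        refine good_cat (hEpr2 t.1) hinner ?_ ?_
        · intro u v u' v' hu hv hu' hv' heqq
          obtain ⟨hup, -⟩ := (hEprP t.1 u).1 hu
          obtain ⟨hup', -⟩ := (hEprP t.1 u').1 hu'
          obtain ⟨m, z, hm, hz, rfl⟩ := hv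
          obtain ⟨m', z', hm', hz', rfl⟩ := hv'
          obtain ⟨l, hlne, hmem, rfl⟩ := (hplusP m).1 hm
          obtain ⟨l', hl'ne, hmem', rfl⟩ := (hplusP m').1 hm'
          obtain ⟨hzp, -⟩ := (hErqP t.2 z).1 hz
          obtain ⟨hzp', -⟩ := (hErqP t.2 z').1 hz'
          have hmas := masterU hG1 hred hrnX' hrq hrp hup hmem hzp hup' hmem' hzp'
            (by simpa using heqq)
          refine ⟨hmas.1, ?_⟩
          rw [hmas.2.1, hmas.2.2]
        · refine ⟨s, ?_⟩
          rintro w ⟨u, v, hu, hv, rfl⟩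
          obtain ⟨hup, hu1⟩ := (hEprP t.1 u).1 hu
          obtain ⟨m, z, hm, hz, rfl⟩ := hv
          obtain ⟨l, hlne, hmem, rfl⟩ := (hplusP m).1 hm
          obtain ⟨hzp, hz1⟩ := (hErqP t.2 z).1 hz
          have hflne : l.flatten ≠ [] :=
            flatten_ne_nil hlne (fun m hm => pathIn_ne_nil (hmem m hm))
          have hfle : φ l.flatten = e := phi_flatten hφ he l hlne
            (fun m hm => ⟨hloopval m (hmem m hm), pathIn_ne_nil (hmem m hm)⟩)
          rw [hφ u _ (pathIn_ne_nil hup) (by simp [hflne]),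
            hφ _ z hflne (pathIn_ne_nil hzp), hfle, hu1, hz1, ← mul_assoc]
          exact ht.2
      -- value lemmas
      have hval1 : ∀ t ∈ pairs1, ∀ w ∈ (c1 t).lang, φ w = s := by
        intro t ht w hw
        rw [hpairs1] at ht
        simp only [Finset.mem_toList, Finset.mem_filter] at ht
        obtain ⟨u, v, hu, hv, rfl⟩ := (hc1P t w).1 hw
        rw [hφ u v (pathIn_ne_nil hu.1) (pathIn_ne_nil hv.1), hu.2, hv.2]
        exact ht.2
      have hval2 : ∀ t ∈ pairs2, ∀ w ∈ (c2 t).lang, φ w = s := by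
        intro t ht w hw
        rw [hpairs2] at ht
        simp only [Finset.mem_toList, Finset.mem_filter] at ht
        obtain ⟨u, l, z, hu, hlne, hmem, hz, rfl⟩ := (hc2P t w).1 hw
        have hflne : l.flatten ≠ [] :=
          flatten_ne_nil hlne (fun m hm => pathIn_ne_nil (hmem m hm))
        have hfle : φ l.flatten = e := phi_flatten hφ he l hlne
          (fun m hm => ⟨hloopval m (hmem m hm), pathIn_ne_nil (hmem m hm)⟩)
        rw [hφ u _ (pathIn_ne_nil hu.1) (by simp [hflne]),
          hφ _ z hflne (pathIn_ne_nil hz.1), hfle, hu.2, hz.2, ← mul_assoc]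
        exact ht.2
      -- disjointness lemmas
      have hd01 : ∀ t (w : List A), w ∈ F0.lang → w ∈ (c1 t).lang → False := by
        intro t w hw0 hw1
        obtain ⟨hwp, -⟩ := (hF0P w).1 hw0
        obtain ⟨u, v, hu, hv, rfl⟩ := (hc1P t w).1 hw1
        exact masterF0 hG1 hred hrnX' hrq hrp hu.1 (l := []) (by simp) hv.1 hwp (by simp)
      have hd02 : ∀ t (w : List A), w ∈ F0.lang → w ∈ (c2 t).lang → False := by
        intro t w hw0 hw1
        obtain ⟨hwp, -⟩ := (hF0P w).1 hw0
        obtain ⟨u, l, z, hu, hlne, hmem, hz, rfl⟩ := (hc2P t w).1 hw1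
        exact masterF0 hG1 hred hrnX' hrq hrp hu.1 hmem hz.1 hwp rfl
      have hd11 : ∀ t t', t ≠ t' → ∀ (w : List A), w ∈ (c1 t).lang → w ∈ (c1 t').lang →
          False := by
        intro t t' htt w hw hw'
        obtain ⟨u, v, hu, hv, rfl⟩ := (hc1P t w).1 hw
        obtain ⟨u', v', hu', hv', heqq⟩ := (hc1P t' (u ++ v)).1 hw'
        have hmas := masterU hG1 hred hrnX' hrq hrp hu.1 (l := []) (by simp) hv.1 hu'.1
          (l' := []) (by simp) hv'.1 (by simpa using heqq)
        apply htt
        have h1 : t.1 = t'.1 := by rw [← hu.2, ← hu'.2, hmas.1]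
        have h2 : t.2 = t'.2 := by rw [← hv.2, ← hv'.2, hmas.2.2]
        exact Prod.ext h1 h2
      have hd12 : ∀ t t' (w : List A), w ∈ (c1 t).lang → w ∈ (c2 t').lang → False := by
        intro t t' w hw hw'
        obtain ⟨u, v, hu, hv, rfl⟩ := (hc1P t w).1 hw
        obtain ⟨u', l', z', hu', hl'ne, hmem', hz', heqq⟩ := (hc2P t' (u ++ v)).1 hw'
        have hmas := masterU hG1 hred hrnX' hrq hrp hu.1 (l := []) (by simp) hv.1 hu'.1
          hmem' hz'.1 (by simpa using heqq)
        exact hl'ne hmas.2.1.symm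
      have hd22 : ∀ t t', t ≠ t' → ∀ (w : List A), w ∈ (c2 t).lang → w ∈ (c2 t').lang →
          False := by
        intro t t' htt w hw hw'
        obtain ⟨u, l, z, hu, hlne, hmem, hz, rfl⟩ := (hc2P t w).1 hw
        obtain ⟨u', l', z', hu', hl'ne, hmem', hz', heqq⟩ := (hc2P t' _).1 hw'
        have hmas := masterU hG1 hred hrnX' hrq hrp hu.1 hmem hz.1 hu'.1 hmem' hz'.1
          heqq
        apply htt
        have h1 : t.1 = t'.1 := by rw [← hu.2, ← hu'.2, hmas.1]
        have h2 : t.2 = t'.2 := by rw [← hz.2, ← hz'.2, hmas.2.2]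
        exact Prod.ext h1 h2
      -- the expression
      set L := F0 :: (pairs1.map c1 ++ pairs2.map c2) with hL
      have hdisjset : ∀ {E F : RE A}, (∀ w : List A, w ∈ E.lang → w ∈ F.lang → False) →
          E.lang ∩ F.lang = ∅ := by
        intro E F h
        rw [Set.eq_empty_iff_forall_notMem]
        rintro w ⟨h1, h2⟩
        exact h w h1 h2
      refine ⟨bigU L, ?_, ?_, ?_⟩
      · -- epsFree
        refine bigU_epsFree L ?_
        intro E hE
        rw [hL] at hE
        rcases List.mem_cons.1 hE with rfl | hE'
        · exact hF01
        · rcases List.mem_append.1 hE' with h1 | h2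
          · obtain ⟨t, -, rfl⟩ := List.mem_map.1 h1
            exact ⟨hEpr1 t.1, hErq1 t.2⟩
          · obtain ⟨t, -, rfl⟩ := List.mem_map.1 h2
            exact ⟨hEpr1 t.1, hEL1, hErq1 t.2⟩
      · -- goodness
        refine good_bigU s L ?_ ?_ ?_
        · intro E hE
          rw [hL] at hE
          rcases List.mem_cons.1 hE with rfl | hE'
          · exact hF02
          · rcases List.mem_append.1 hE' with h1 | h2
            · obtain ⟨t, ht, rfl⟩ := List.mem_map.1 h1
              exact hgood1 t ht
            · obtain ⟨t, ht, rfl⟩ := List.mem_map.1 h2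
              exact hgood2 t ht
        · intro E hE w hw
          rw [hL] at hE
          rcases List.mem_cons.1 hE with rfl | hE'
          · exact ((hF0P w).1 hw).2
          · rcases List.mem_append.1 hE' with h1 | h2
            · obtain ⟨t, ht, rfl⟩ := List.mem_map.1 h1
              exact hval1 t ht w hw
            · obtain ⟨t, ht, rfl⟩ := List.mem_map.1 h2
              exact hval2 t ht w hw
        · rw [hL]
          refine List.pairwise_cons.2 ⟨?_, ?_⟩
          · intro E hE
            rcases List.mem_append.1 hE with h1 | h2
            · obtain ⟨t, -, rfl⟩ := List.mem_map.1 h1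
              exact hdisjset (hd01 t)
            · obtain ⟨t, -, rfl⟩ := List.mem_map.1 h2
              exact hdisjset (hd02 t)
          · rw [List.pairwise_append]
            refine ⟨?_, ?_, ?_⟩
            · rw [List.pairwise_map]
              refine List.Pairwise.imp ?_ (Finset.nodup_toList _)
              intro t t' htt
              exact hdisjset (hd11 t t' htt)
            · rw [List.pairwise_map]
              refine List.Pairwise.imp ?_ (Finset.nodup_toList _)
              intro t t' htt
              exact hdisjset (hd22 t t' htt)
            · intro E hE F hF
              obtain ⟨t, -, rfl⟩ := List.mem_map.1 hE
              obtain ⟨t', -, rfl⟩ := List.mem_map.1 hF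
              exact hdisjset (hd12 t t')
      · -- language
        rw [bigU_lang]
        ext w
        simp only [Set.mem_setOf_eq, Auto.Lset]
        constructor
        · rintro ⟨E, hE, hw⟩
          rw [hL] at hE
          rcases List.mem_cons.1 hE with rfl | hE'
          · obtain ⟨hwp, hws⟩ := (hF0P w).1 hw
            exact ⟨pathIn_mono hX'sub hwp, hws⟩
          · rcases List.mem_append.1 hE' with h1 | h2
            · obtain ⟨t, ht, rfl⟩ := List.mem_map.1 h1
              refine ⟨?_, hval1 t ht w hw⟩
              obtain ⟨u, v, hu, hv, rfl⟩ := (hc1P t w).1 hw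
              exact pathIn_append hu.1 hv.1 hrX hX'sub hX'sub
            · obtain ⟨t, ht, rfl⟩ := List.mem_map.1 h2
              refine ⟨?_, hval2 t ht w hw⟩
              obtain ⟨u, l, z, hu, hlne, hmem, hz, rfl⟩ := (hc2P t w).1 hw
              have hmid : M.pathIn X r (l.flatten ++ z) q :=
                pathIn_append (pathIn_flatten hX'sub hrX l hlne hmem) hz.1 hrX
                  (le_refl X) hX'sub
              exact pathIn_append hu.1 hmid hrX hX'sub (le_refl X)
        · rintro ⟨hwp, hws⟩
          rcases decompose hX'def hrX hwp with hLft | ⟨u, l, z, hu, hmem, hz, heqq⟩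
          · exact ⟨F0, by rw [hL]; exact List.mem_cons_self, (hF0P w).2 ⟨hLft, hws⟩⟩
          · rcases eq_or_ne l [] with rfl | hlne
            · simp only [List.flatten_nil, List.nil_append] at heqq
              have hvaluz : φ u * φ z = s := by
                rw [← hφ u z (pathIn_ne_nil hu) (pathIn_ne_nil hz), ← heqq]
                exact hws
              have hmemp : (φ u, φ z) ∈ pairs1 := by
                rw [hpairs1]
                simp only [Finset.mem_toList, Finset.mem_filter]
                exact ⟨Finset.mem_univ _, hvaluz⟩
              refine ⟨c1 (φ u, φ z), ?_, ?_⟩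
              · rw [hL]
                refine List.mem_cons_of_mem _ (List.mem_append.2 (Or.inl ?_))
                exact List.mem_map.2 ⟨(φ u, φ z), hmemp, rfl⟩
              · exact (hc1P _ w).2 ⟨u, z, ⟨hu, rfl⟩, ⟨hz, rfl⟩, heqq⟩
            · have hflne : l.flatten ≠ [] :=
                flatten_ne_nil hlne (fun m hm => pathIn_ne_nil (hmem m hm))
              have hfle : φ l.flatten = e := phi_flatten hφ he l hlne
                (fun m hm => ⟨hloopval m (hmem m hm), pathIn_ne_nil (hmem m hm)⟩)
              have hvaluz : φ u * e * φ z = s := by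
                rw [mul_assoc, ← hfle, ← hφ _ z hflne (pathIn_ne_nil hz),
                  ← hφ u _ (pathIn_ne_nil hu) (by simp [hflne]), ← heqq]
                exact hws
              have hmemp : (φ u, φ z) ∈ pairs2 := by
                rw [hpairs2]
                simp only [Finset.mem_toList, Finset.mem_filter]
                exact ⟨Finset.mem_univ _, hvaluz⟩
              refine ⟨c2 (φ u, φ z), ?_, ?_⟩
              · rw [hL]
                refine List.mem_cons_of_mem _ (List.mem_append.2 (Or.inr ?_))
                exact List.mem_map.2 ⟨(φ u, φ z), hmemp, rfl⟩
              · exact (hc2P _ w).2 ⟨u, l, z, ⟨hu, rfl⟩, hlne, hmem, ⟨hz, rfl⟩, heqq⟩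

end Main

end GoodProof

/-- **Good automata to good expressions (state elimination).** If `M` is a
reduced `φ`-good automaton then for all states `p, q`, every set `X` of states
strictly below both `p` and `q`, and every `s ∈ S`, there is an `ε`-free
`φ`-good rational expression denoting `L_{p,X,q} ∩ φ⁻¹(s)`. -/
theorem good_expression_of_good_automaton {A S : Type} [Fintype A]
    [Semigroup S] [Fintype S] (φ : List A → S)
    (hφ : ∀ u v : List A, u ≠ [] → v ≠ [] → φ (u ++ v) = φ u * φ v)
    (M : Auto A) (hM : M.Good φ)
    (hred : ∀ q : M.Q,
      (∃ (w : List A) (ρ : Fin (w.length + 1) → M.Q),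
        w ≠ [] ∧ M.FinAccRun w ρ ∧ ∃ i, ρ i = q) ∨
      (∃ (w : ℕ → A) (ρ : ℕ → M.Q), M.InfAccRun w ρ ∧ ∃ i, ρ i = q)) :
    ∀ (p q : M.Q) (X : Set M.Q) (s : S),
      (∀ x ∈ X, M.slt x p ∧ M.slt x q) →
      ∃ F : RE A, F.epsFree ∧ F.Good φ ∧
        F.lang = {w : List A | w ∈ M.Lset X p q ∧ φ w = s} := by
  intro p q X s hX
  exact GoodProof.main_aux hφ hM.1.1 hM.1.2.1 hred X.ncard X rfl p q s hX
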